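/- Let $E_1,\dots,E_n,F$ be Banach spaces (over the real or complex field), $1<p<\infty$, $1/p+1/p^*=1$, and $T:E_1\times\cdots\times E_n\to F$ a bounded $n$-linear operator. The following are equivalent: (i) for all sequences $(x_i^{(j)})_{i=1}^\infty$ in $E_j$ with $\sum_{i=1}^\infty\|x_i^{(j)}\|^{np}<\infty$ for $j=1,\dots,n$, the sequence $(T(x_i^{(1)},\dots,x_i^{(n)}))_{i=1}^\infty$ is Cohen strongly $p$-summing in $F$; (ii) there exists $C>0$ such that $\sum_{i=1}^m|\varphi_i(T(x_i^{(1)},\dots,x_i^{(n)}))|\le C\,\prod_{j=1}^n(\sum_{i=1}^m\|x_i^{(j)}\|^{np})^{1/(np)}\,\|(\varphi_i)_{i=1}^m\|_{w,p^*}$ for all $m\in\mathbb{N}$, all $x_i^{(j)}\in E_j$ and all $\varphi_i\in F'$. -/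

import Mathlib

open scoped BigOperators

/-- The weak `q`-norm of a finite family of continuous linear functionals on `F`. -/
noncomputable def weakNorm {𝕜 F : Type*} [RCLike 𝕜] [NormedAddCommGroup F] [NormedSpace 𝕜 F]
    {ι : Type*} [Fintype ι] (q : ℝ) (φ : ι → F →L[𝕜] 𝕜) : ℝ :=
  ⨆ y : Metric.closedBall (0 : F) 1, (∑ i, ‖φ i (y : F)‖ ^ q) ^ (1 / q)

section helpers
variable {𝕜 F : Type*} [RCLike 𝕜] [NormedAddCommGroup F] [NormedSpace 𝕜 F]
  {ι : Type*} [Fintype ι] {q : ℝ}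

lemma le_weakNorm (hq : 0 < q) (φ : ι → F →L[𝕜] 𝕜) {y : F}
    (hy : y ∈ Metric.closedBall (0 : F) 1) :
    (∑ i, ‖φ i y‖ ^ q) ^ (1 / q) ≤ weakNorm q φ := by
  have hb : BddAbove (Set.range fun y : Metric.closedBall (0 : F) 1 =>
      (∑ i, ‖φ i (y : F)‖ ^ q) ^ (1 / q)) := by
    refine ⟨(∑ i, ‖φ i‖ ^ q) ^ (1 / q), ?_⟩
    rintro _ ⟨⟨z, hz⟩, rfl⟩
    have hz1 : ‖z‖ ≤ 1 := by simpa [Metric.mem_closedBall, dist_zero_right] using hz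
    refine Real.rpow_le_rpow (Finset.sum_nonneg fun i _ => Real.rpow_nonneg (norm_nonneg _) _)
      (Finset.sum_le_sum fun i _ => ?_) (by positivity)
    exact Real.rpow_le_rpow (norm_nonneg _)
      (le_trans ((φ i).le_opNorm z) (by nlinarith [norm_nonneg (φ i)])) hq.le
  exact le_ciSup hb (⟨y, hy⟩ : Metric.closedBall (0 : F) 1)

lemma weakNorm_le (φ : ι → F →L[𝕜] 𝕜) {M : ℝ}
    (h : ∀ y ∈ Metric.closedBall (0 : F) 1, (∑ i, ‖φ i y‖ ^ q) ^ (1 / q) ≤ M) :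
    weakNorm q φ ≤ M := by
  have : Nonempty (Metric.closedBall (0 : F) 1) := ⟨⟨0, by simp⟩⟩
  exact ciSup_le fun y => h y y.2

lemma weakNorm_nonneg (hq : 0 < q) (φ : ι → F →L[𝕜] 𝕜) : 0 ≤ weakNorm q φ :=
  le_trans (Real.rpow_nonneg (Finset.sum_nonneg fun i _ => Real.rpow_nonneg (norm_nonneg _) _) _)
    (le_weakNorm hq φ (y := 0) (by simp))

lemma zero_of_ball_zero (φ : F →L[𝕜] 𝕜)
    (h : ∀ y ∈ Metric.closedBall (0 : F) 1, ‖φ y‖ = 0) (v : F) : φ v = 0 := by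
  have hc : (0:ℝ) < ‖v‖ + 1 := by positivity
  set a : 𝕜 := ((‖v‖ + 1 : ℝ) : 𝕜)⁻¹
  have hy : a • v ∈ Metric.closedBall (0 : F) 1 := by
    simp only [Metric.mem_closedBall, dist_zero_right, norm_smul, a, norm_inv,
      RCLike.norm_ofReal, abs_of_pos hc]
    rw [inv_mul_le_iff₀ hc]; linarith
  have := h _ hy
  rw [map_smul, norm_smul, norm_inv, RCLike.norm_ofReal, abs_of_pos hc] at this
  rcases mul_eq_zero.1 this with h' | h'
  · exact absurd h' (by positivity)
  · simpa using h'
end helpers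

/-- A bounded `n`-linear operator `T : E₁ × ⋯ × Eₙ → F` maps `n`-tuples of absolutely
`np`-summable sequences to Cohen strongly `p`-summing sequences iff the Cohen summing
inequality (with the product of `np`-norms) holds. -/
theorem stmt3 {𝕜 : Type*} [RCLike 𝕜] {n : ℕ} (hn : 0 < n)
    {E : Fin n → Type*} [∀ j, NormedAddCommGroup (E j)] [∀ j, NormedSpace 𝕜 (E j)]
    [∀ j, CompleteSpace (E j)]
    {F : Type*} [NormedAddCommGroup F] [NormedSpace 𝕜 F] [CompleteSpace F]
    (p q : ℝ) (hp : 1 < p) (hq : 1 / p + 1 / q = 1)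
    (T : ContinuousMultilinearMap 𝕜 E F) :
    (∀ x : ∀ j, ℕ → E j, (∀ j, Summable (fun i => ‖x j i‖ ^ ((n : ℝ) * p))) →
      ∀ φ : ℕ → F →L[𝕜] 𝕜,
        (∃ C : ℝ, ∀ y ∈ Metric.closedBall (0 : F) 1, ∀ s : Finset ℕ,
            ∑ i ∈ s, ‖φ i y‖ ^ q ≤ C) →
        Summable (fun i => ‖φ i (T (fun j => x j i))‖))
    ↔ (∃ C > 0, ∀ (m : ℕ) (x : ∀ j, Fin m → E j) (φ : Fin m → F →L[𝕜] 𝕜),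
        ∑ i, ‖φ i (T (fun j => x j i))‖ ≤
          C * (∏ j, (∑ i, ‖x j i‖ ^ ((n : ℝ) * p)) ^ (1 / ((n : ℝ) * p)))
            * weakNorm q φ) := by
  have hp0 : 0 < p := lt_trans one_pos hp
  have hq0 : 0 < q := by
    have hp1 : 1 / p < 1 := (div_lt_one hp0).2 hp
    have h1 : 0 < 1 / q := by linarith
    exact one_div_pos.1 h1
  set r : ℝ := (n : ℝ) * p with hr_def
  have hr0 : 0 < r := by positivity
  have h2r : ((2:ℝ) ^ (-(0:ℝ))) = 1 := by norm_num
  have hgeo_eq : ∀ k : ℕ, (2:ℝ) ^ (-(k:ℝ)) = (2⁻¹ : ℝ) ^ k := fun k => by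
    rw [Real.rpow_neg (by norm_num), Real.rpow_natCast, inv_pow]
  have hgeo : Summable (fun k : ℕ => (2:ℝ) ^ (-(k:ℝ))) := by
    refine Summable.congr (summable_geometric_of_lt_one (by norm_num) (by norm_num :
      (2⁻¹:ℝ) < 1)) fun k => (hgeo_eq k).symm
  have hgeo_tsum : ∑' k : ℕ, (2:ℝ) ^ (-(k:ℝ)) = 2 := by
    rw [tsum_congr hgeo_eq, tsum_geometric_of_lt_one (by norm_num) (by norm_num)]
    norm_num
  have pow_div_cancel : ∀ {t : ℝ}, 0 ≤ t → ∀ {s : ℝ}, s ≠ 0 → (t ^ (1/s)) ^ s = t := by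
    intro t ht s hs
    rw [← Real.rpow_mul ht, one_div_mul_cancel hs, Real.rpow_one]
  have two_pow_div : ∀ (a : ℝ) {s : ℝ}, s ≠ 0 → (((2:ℝ) ^ (a/s)) ^ s) = (2:ℝ) ^ a := by
    intro a s hs
    rw [← Real.rpow_mul (by norm_num), div_mul_cancel₀ _ hs]
  -- the equivalence ℕ ≃ ℕ × ℕ
  let e : ℕ ≃ ℕ × ℕ := ⟨Nat.unpair, fun p => Nat.pair p.1 p.2, Nat.pair_unpair,
    fun p => Nat.unpair_pair p.1 p.2⟩
  constructor
  · intro H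
    by_contra hcon
    push_neg at hcon
    choose m xd φd hlt using fun k : ℕ => hcon ((4:ℝ) ^ k) (by positivity)
    -- positivity of the norms
    have hsum_nonneg : ∀ k (j : Fin n), 0 ≤ ∑ i, ‖xd k j i‖ ^ r :=
      fun k j => Finset.sum_nonneg fun i _ => Real.rpow_nonneg (norm_nonneg _) _
    have hS_nonneg : ∀ k, 0 ≤ ∑ i, ‖φd k i (T fun j => xd k j i)‖ :=
      fun k => Finset.sum_nonneg fun i _ => norm_nonneg _
    have hsum_pos : ∀ k (j : Fin n), 0 < ∑ i, ‖xd k j i‖ ^ r := by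
      intro k j
      rcases (hsum_nonneg k j).lt_or_eq with h | h
      · exact h
      exfalso
      have hx0 : ∀ i, xd k j i = 0 := by
        intro i
        have h1 := (Finset.sum_eq_zero_iff_of_nonneg
          (fun i _ => Real.rpow_nonneg (norm_nonneg (xd k j i)) r)).1 h.symm i (Finset.mem_univ i)
        have h2 : ‖xd k j i‖ = 0 := by
          have := (Real.rpow_eq_zero (norm_nonneg _) hr0.ne').1 h1
          exact this
        simpa using h2
      have hS0 : ∑ i, ‖φd k i (T fun j' => xd k j' i)‖ = 0 :=
        Finset.sum_eq_zero fun i _ => by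
          rw [T.map_coord_zero j (hx0 i), map_zero, norm_zero]
      have hP0 : (∑ i, ‖xd k j i‖ ^ r) ^ (1/r) = 0 := by
        rw [← h, Real.zero_rpow (by positivity : (1:ℝ)/r ≠ 0)]
      have := hlt k
      rw [hS0] at this
      have : (4:ℝ)^k * (∏ j', (∑ i, ‖xd k j' i‖ ^ r) ^ (1/r)) *
          weakNorm q (φd k) < 0 := this
      rw [Finset.prod_eq_zero (Finset.mem_univ j) hP0] at this
      simp at this
    have hA_pos : ∀ k (j : Fin n), 0 < (∑ i, ‖xd k j i‖ ^ r) ^ (1/r) :=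
      fun k j => Real.rpow_pos_of_pos (hsum_pos k j) _
    have hW_pos : ∀ k, 0 < weakNorm q (φd k) := by
      intro k
      rcases (weakNorm_nonneg hq0 (φd k)).lt_or_eq with h | h
      · exact h
      exfalso
      have hφ0 : ∀ i v, φd k i v = 0 := by
        intro i v
        refine zero_of_ball_zero (φd k i) (fun y hy => ?_) v
        have h1 := le_weakNorm hq0 (φd k) hy
        rw [← h] at h1
        have h2 : (∑ i', ‖φd k i' y‖ ^ q) ^ (1/q) = 0 :=
          le_antisymm h1 (Real.rpow_nonneg (Finset.sum_nonneg fun i' _ =>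
            Real.rpow_nonneg (norm_nonneg _) _) _)
        have h3 := (Real.rpow_eq_zero (Finset.sum_nonneg fun i' _ =>
          Real.rpow_nonneg (norm_nonneg _) _) (by positivity : (1:ℝ)/q ≠ 0)).1 h2
        have h4 := (Finset.sum_eq_zero_iff_of_nonneg
          (fun i' _ => Real.rpow_nonneg (norm_nonneg ((φd k i') y)) q)).1 h3 i (Finset.mem_univ i)
        exact (Real.rpow_eq_zero (norm_nonneg _) hq0.ne').1 h4
      have hS0 : ∑ i, ‖φd k i (T fun j' => xd k j' i)‖ = 0 :=
        Finset.sum_eq_zero fun i _ => by rw [hφ0 i, norm_zero]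
      have := hlt k
      rw [hS0, ← h] at this
      simp at this
    -- scaling constants
    set c : ℕ → Fin n → ℝ := fun k j =>
      (2:ℝ) ^ (-(k:ℝ)/r) / ((∑ i, ‖xd k j i‖ ^ r) ^ (1/r)) with hc_def
    set d : ℕ → ℝ := fun k => (2:ℝ) ^ (-(k:ℝ)/q) / weakNorm q (φd k) with hd_def
    have hc_pos : ∀ k j, 0 < c k j := fun k j => by
      rw [hc_def]
      exact div_pos (Real.rpow_pos_of_pos (by norm_num) _) (hA_pos k j)
    have hd_pos : ∀ k, 0 < d k := fun k => by
      rw [hd_def]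
      exact div_pos (Real.rpow_pos_of_pos (by norm_num) _) (hW_pos k)
    -- the glued sequences
    set Y : ∀ j, ℕ × ℕ → E j := fun j kl =>
      if h : kl.2 < m kl.1 then ((c kl.1 j : ℝ) : 𝕜) • xd kl.1 j ⟨kl.2, h⟩ else 0 with hY_def
    set Ψ : ℕ × ℕ → F →L[𝕜] 𝕜 := fun kl =>
      if h : kl.2 < m kl.1 then ((d kl.1 : ℝ) : 𝕜) • φd kl.1 ⟨kl.2, h⟩ else 0 with hΨ_def
    set X : ∀ j, ℕ → E j := fun j i => Y j (Nat.unpair i) with hX_def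
    set Φ : ℕ → F →L[𝕜] 𝕜 := fun i => Ψ (Nat.unpair i) with hΦ_def
    have hXval : ∀ (j : Fin n) k l (h : l < m k),
        X j (Nat.pair k l) = ((c k j : ℝ) : 𝕜) • xd k j ⟨l, h⟩ := by
      intro j k l h
      show Y j (Nat.unpair (Nat.pair k l)) = _
      rw [Nat.unpair_pair]
      exact dif_pos h
    have hΦval : ∀ k l (h : l < m k),
        Φ (Nat.pair k l) = ((d k : ℝ) : 𝕜) • φd k ⟨l, h⟩ := by
      intro k l h
      show Ψ (Nat.unpair (Nat.pair k l)) = _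
      rw [Nat.unpair_pair]
      exact dif_pos h
    have hYzero : ∀ (j : Fin n) k l, ¬ l < m k → Y j (k, l) = 0 := by
      intro j k l h
      exact dif_neg h
    have hΨzero : ∀ k l, ¬ l < m k → Ψ (k, l) = 0 := by
      intro k l h
      exact dif_neg h
    have hYval : ∀ (j : Fin n) k (i : Fin (m k)),
        Y j (k, (i : ℕ)) = ((c k j : ℝ) : 𝕜) • xd k j i := by
      intro j k i
      rw [hY_def]
      exact (dif_pos i.isLt).trans (by rw [Fin.eta])
    have hΨval' : ∀ k (i : Fin (m k)), Ψ (k, (i : ℕ)) = ((d k : ℝ) : 𝕜) • φd k i := by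
      intro k i
      rw [hΨ_def]
      exact (dif_pos i.isLt).trans (by rw [Fin.eta])
    -- c k j to the r-th power
    have hcr : ∀ k (j : Fin n), (c k j) ^ r = (2:ℝ) ^ (-(k:ℝ)) / (∑ i, ‖xd k j i‖ ^ r) := by
      intro k j
      rw [hc_def]
      rw [Real.div_rpow (Real.rpow_nonneg (by norm_num) _) (Real.rpow_nonneg (hsum_nonneg k j) _),
        two_pow_div _ hr0.ne', pow_div_cancel (hsum_nonneg k j) hr0.ne']
    have hdq : ∀ k, (d k) ^ q = (2:ℝ) ^ (-(k:ℝ)) / (weakNorm q (φd k)) ^ q := by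
      intro k
      rw [hd_def]
      rw [Real.div_rpow (Real.rpow_nonneg (by norm_num) _) (hW_pos k).le, two_pow_div _ hq0.ne']
    -- row sums for X
    have hrow_eq : ∀ (j : Fin n) k, ∑' l, ‖Y j (k, l)‖ ^ r = (2:ℝ) ^ (-(k:ℝ)) := by
      intro j k
      rw [tsum_eq_sum (s := Finset.range (m k)) (fun l hl => by
        rw [hYzero j k l (by simpa using hl), norm_zero, Real.zero_rpow hr0.ne'])]
      rw [← Fin.sum_univ_eq_sum_range (fun l => ‖Y j (k, l)‖ ^ r) (m k)]
      rw [Finset.sum_congr rfl (fun i _ => by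
        rw [hYval j k i, norm_smul, RCLike.norm_ofReal, abs_of_pos (hc_pos k j),
          Real.mul_rpow (hc_pos k j).le (norm_nonneg _)])]
      rw [← Finset.mul_sum, hcr k j, div_mul_cancel₀ _ (hsum_pos k j).ne']
    have hYrow_summable : ∀ (j : Fin n) k, Summable fun l => ‖Y j (k, l)‖ ^ r := by
      intro j k
      exact summable_of_ne_finset_zero (s := Finset.range (m k)) (fun l hl => by
        rw [hYzero j k l (by simpa using hl), norm_zero, Real.zero_rpow hr0.ne'])
    have hYsum : ∀ (j : Fin n), Summable (fun kl : ℕ × ℕ => ‖Y j kl‖ ^ r) := by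
      intro j
      refine (summable_prod_of_nonneg (fun kl => Real.rpow_nonneg (norm_nonneg _) _)).2
        ⟨fun k => hYrow_summable j k, ?_⟩
      exact Summable.congr hgeo fun k => (hrow_eq j k).symm
    have hX_sum : ∀ (j : Fin n), Summable fun i => ‖X j i‖ ^ r := by
      intro j
      exact (Equiv.summable_iff e (f := fun kl : ℕ × ℕ => ‖Y j kl‖ ^ r)).2 (hYsum j)
    -- the weak q bound for Φ
    have hb : ∀ y ∈ Metric.closedBall (0 : F) 1, ∀ s : Finset ℕ,
        ∑ i ∈ s, ‖Φ i y‖ ^ q ≤ 2 := by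
      intro y hy s
      set g : ℕ × ℕ → ℝ := fun kl => ‖Ψ kl y‖ ^ q with hg_def
      have hg_nonneg : ∀ kl, 0 ≤ g kl := fun kl => Real.rpow_nonneg (norm_nonneg _) _
      have hg_rowzero : ∀ k l, l ∉ Finset.range (m k) → g (k, l) = 0 := by
        intro k l hl
        rw [hg_def]
        simp only
        rw [hΨzero k l (by simpa using hl)]
        simp [Real.zero_rpow hq0.ne']
      have hg_row_summable : ∀ k, Summable fun l => g (k, l) :=
        fun k => summable_of_ne_finset_zero (s := Finset.range (m k)) (hg_rowzero k)
      have hg_row_le : ∀ k, ∑' l, g (k, l) ≤ (2:ℝ) ^ (-(k:ℝ)) := by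
        intro k
        rw [tsum_eq_sum (s := Finset.range (m k)) (hg_rowzero k)]
        rw [← Fin.sum_univ_eq_sum_range (fun l => g (k, l)) (m k)]
        have hgval : ∀ i : Fin (m k), g (k, (i : ℕ)) = (d k) ^ q * ‖φd k i y‖ ^ q := by
          intro i
          show ‖Ψ (k, (i : ℕ)) y‖ ^ q = _
          rw [hΨval' k i, ContinuousLinearMap.smul_apply, norm_smul, RCLike.norm_ofReal,
            abs_of_pos (hd_pos k), Real.mul_rpow (hd_pos k).le (norm_nonneg _)]
        rw [Finset.sum_congr rfl (fun i _ => hgval i), ← Finset.mul_sum, hdq k]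
        have h1 : ∑ i, ‖φd k i y‖ ^ q ≤ (weakNorm q (φd k)) ^ q := by
          have h2 := le_weakNorm hq0 (φd k) hy
          have h3 := Real.rpow_le_rpow (Real.rpow_nonneg (Finset.sum_nonneg fun i _ =>
            Real.rpow_nonneg (norm_nonneg _) _) _) h2 hq0.le
          rwa [pow_div_cancel (Finset.sum_nonneg fun i _ =>
            Real.rpow_nonneg (norm_nonneg _) _) hq0.ne'] at h3
        calc (2:ℝ) ^ (-(k:ℝ)) / (weakNorm q (φd k)) ^ q * ∑ i, ‖φd k i y‖ ^ q
            ≤ (2:ℝ) ^ (-(k:ℝ)) / (weakNorm q (φd k)) ^ q * (weakNorm q (φd k)) ^ q := by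
              exact mul_le_mul_of_nonneg_left h1 (div_nonneg
                (Real.rpow_nonneg (by norm_num) _) (Real.rpow_nonneg (hW_pos k).le _))
          _ = (2:ℝ) ^ (-(k:ℝ)) := by
              rw [div_mul_cancel₀]
              exact (Real.rpow_pos_of_pos (hW_pos k) q).ne'
      have hg_rowsum_summable : Summable fun k => ∑' l, g (k, l) :=
        Summable.of_nonneg_of_le (fun k => tsum_nonneg fun l => hg_nonneg _) hg_row_le hgeo
      have hg_summable : Summable g :=
        (summable_prod_of_nonneg hg_nonneg).2 ⟨hg_row_summable, hg_rowsum_summable⟩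
      have hg_tsum : ∑' kl, g kl ≤ 2 := by
        rw [Summable.tsum_prod hg_summable]
        calc ∑' k, ∑' l, g (k, l) ≤ ∑' k : ℕ, (2:ℝ) ^ (-(k:ℝ)) :=
              Summable.tsum_le_tsum hg_row_le hg_rowsum_summable hgeo
          _ = 2 := hgeo_tsum
      have hcomp : Summable (g ∘ e) := (Equiv.summable_iff e (f := g)).2 hg_summable
      calc ∑ i ∈ s, ‖Φ i y‖ ^ q = ∑ i ∈ s, (g ∘ e) i :=
            Finset.sum_congr rfl (fun i _ => rfl)
        _ ≤ ∑' i : ℕ, (g ∘ e) i := Summable.sum_le_tsum s (fun i _ => hg_nonneg _) hcomp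
        _ = ∑' kl, g kl := Equiv.tsum_eq e g
        _ ≤ 2 := hg_tsum
    have hsum := H X hX_sum Φ ⟨2, hb⟩
    obtain ⟨K, hK⟩ := pow_unbounded_of_one_lt
      (∑' i, ‖Φ i (T fun j => X j i)‖) (one_lt_two (α := ℝ))
    have hn0 : (n:ℝ) ≠ 0 := Nat.cast_ne_zero.2 hn.ne'
    have hltK := hlt K
    set PK : ℝ := ∏ j, (∑ i, ‖xd K j i‖ ^ r) ^ (1/r) with hPK_def
    set WK : ℝ := weakNorm q (φd K) with hWK_def
    have hPK_pos : 0 < PK := Finset.prod_pos fun j _ => hA_pos K j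
    have hWK_pos : 0 < WK := hW_pos K
    -- value of each term in block K
    have hterm : ∀ i : Fin (m K), ‖Φ (Nat.pair K (i : ℕ)) (T fun j => X j (Nat.pair K (i : ℕ)))‖
        = d K * (∏ j, c K j) * ‖φd K i (T fun j => xd K j i)‖ := by
      intro i
      have h1 : Φ (Nat.pair K (i : ℕ)) = ((d K : ℝ) : 𝕜) • φd K i := by
        rw [hΦval K i i.isLt, Fin.eta]
      have h2 : (fun j => X j (Nat.pair K (i : ℕ))) = fun j => ((c K j : ℝ) : 𝕜) • xd K j i := by
        funext j
        rw [hXval j K i i.isLt, Fin.eta]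
      have h3 : T (fun j => ((c K j : ℝ) : 𝕜) • xd K j i)
          = (∏ j, ((c K j : ℝ) : 𝕜)) • T (fun j => xd K j i) :=
        T.toMultilinearMap.map_smul_univ _ _
      rw [h1, h2, ContinuousLinearMap.smul_apply, h3, map_smul, norm_smul, norm_smul,
        norm_prod, RCLike.norm_ofReal, abs_of_pos (hd_pos K),
        Finset.prod_congr rfl (fun j _ => by rw [RCLike.norm_ofReal, abs_of_pos (hc_pos K j)])]
      ring
    -- the scaling factor of block K
    have hDK : d K * (∏ j, c K j) = (2:ℝ) ^ (-(K:ℝ)) / (PK * WK) := by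
      have hcval : ∀ j : Fin n, c K j
          = (2:ℝ) ^ (-(K:ℝ)/r) / (∑ i, ‖xd K j i‖ ^ r) ^ (1/r) := fun j => by
        simp only [hc_def]
      have hprod : (∏ j, c K j) = (2:ℝ) ^ (-(K:ℝ)/p) / PK := by
        rw [Finset.prod_congr rfl (fun j _ => hcval j), Finset.prod_div_distrib,
          Finset.prod_const, Finset.card_univ, Fintype.card_fin, hPK_def]
        congr 1
        rw [← Real.rpow_natCast ((2:ℝ) ^ (-(K:ℝ)/r)) n, ← Real.rpow_mul (by norm_num)]
        congr 1
        rw [hr_def]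
        field_simp
      have hdval : d K = (2:ℝ) ^ (-(K:ℝ)/q) / WK := by simp only [hd_def, hWK_def]
      rw [hprod, hdval, div_mul_div_comm]
      congr 1
      · rw [← Real.rpow_add (by norm_num)]
        congr 1
        have h4 : -(K:ℝ)/q + -(K:ℝ)/p = -(K:ℝ) * (1/p + 1/q) := by ring
        rw [h4, hq, mul_one]
      · ring
    -- the sum over block K
    set sF : Finset ℕ := (Finset.range (m K)).image (Nat.pair K) with hsF_def
    have hblock : ∑ i ∈ sF, ‖Φ i (T fun j => X j i)‖
        = (2:ℝ) ^ (-(K:ℝ)) / (PK * WK) * ∑ i : Fin (m K), ‖φd K i (T fun j => xd K j i)‖ := by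
      rw [hsF_def, Finset.sum_image (fun a _ b _ hab => by
        have := congrArg (fun t => (Nat.unpair t).2) hab
        simpa [Nat.unpair_pair] using this)]
      rw [← Fin.sum_univ_eq_sum_range
        (fun l => ‖Φ (Nat.pair K l) (T fun j => X j (Nat.pair K l))‖) (m K)]
      rw [Finset.sum_congr rfl (fun i _ => hterm i), ← Finset.mul_sum, hDK]
    have hgt : (2:ℝ) ^ K < ∑ i ∈ sF, ‖Φ i (T fun j => X j i)‖ := by
      rw [hblock]
      have h5 := mul_lt_mul_of_pos_left hltK
        (show (0:ℝ) < (2:ℝ) ^ (-(K:ℝ)) / (PK * WK) by positivity)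
      refine lt_of_le_of_lt (le_of_eq ?_) h5
      have h6 : (2:ℝ) ^ (-(K:ℝ)) * (4:ℝ) ^ K = 2 ^ K := by
        rw [hgeo_eq K, show (4:ℝ) = 2⁻¹⁻¹ * 2 by norm_num, mul_pow, ← mul_assoc,
          ← mul_pow, ← mul_pow]
        norm_num
      field_simp
      rw [← h6]
    have hub := Summable.sum_le_tsum sF (fun i _ => norm_nonneg _) hsum
    linarith
  · -- (ii) ⇒ (i)
    rintro ⟨C, hCpos, hC⟩ x hx φ ⟨C₀, hφ⟩
    have hC₀ : 0 ≤ C₀ := by simpa using hφ 0 (by simp) ∅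
    set M : Fin n → ℝ := fun j => ∑' i, ‖x j i‖ ^ r with hM
    have hMn : ∀ j, 0 ≤ M j := fun j => tsum_nonneg fun i => Real.rpow_nonneg (norm_nonneg _) _
    refine summable_of_sum_le (c := C * (∏ j, (M j) ^ (1/r)) * C₀ ^ (1/q))
      (fun i => norm_nonneg _) fun s => ?_
    set m : ℕ := (if h : s.Nonempty then s.max' h else 0) + 1 with hm
    have hsm : ∀ i ∈ s, i < m := by
      intro i hi
      have : s.Nonempty := ⟨i, hi⟩
      rw [hm, dif_pos this]
      exact Nat.lt_succ_of_le (s.le_max' i hi)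
    set x' : ∀ j, Fin m → E j := fun j i => x j i with hx'
    set φ' : Fin m → F →L[𝕜] 𝕜 := fun i => if (i : ℕ) ∈ s then φ i else 0 with hφ'
    have key := hC m x' φ'
    -- LHS equality
    have hL : ∑ i : Fin m, ‖φ' i (T (fun j => x' j i))‖
        = ∑ i ∈ s, ‖φ i (T (fun j => x j i))‖ := by
      rw [show (∑ i : Fin m, ‖φ' i (T (fun j => x' j i))‖)
          = ∑ i : Fin m, (fun l : ℕ => ‖(if l ∈ s then φ l else 0) (T (fun j => x j l))‖) (i : ℕ)
          from rfl,
        Fin.sum_univ_eq_sum_range (fun l => ‖(if l ∈ s then φ l else 0) (T (fun j => x j l))‖) m]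
      rw [Finset.sum_congr rfl (fun i _ => ?_), Finset.sum_ite_mem, Finset.inter_comm,
        Finset.inter_eq_left.2 fun i hi => Finset.mem_range.2 (hsm i hi)]
      split_ifs with h <;> simp
    rw [hL] at key
    refine le_trans key ?_
    have hB1 : ∀ j, (∑ i : Fin m, ‖x' j i‖ ^ r) ^ (1/r) ≤ (M j) ^ (1/r) := by
      intro j
      refine Real.rpow_le_rpow (Finset.sum_nonneg fun i _ => Real.rpow_nonneg (norm_nonneg _) _)
        ?_ (by positivity)
      rw [show (∑ i : Fin m, ‖x' j i‖ ^ r)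
          = ∑ i : Fin m, (fun l : ℕ => ‖x j l‖ ^ r) (i : ℕ) from rfl,
        Fin.sum_univ_eq_sum_range (fun l => ‖x j l‖ ^ r) m]
      exact Summable.sum_le_tsum _ (fun i _ => Real.rpow_nonneg (norm_nonneg _) _) (hx j)
    have hB2 : weakNorm q φ' ≤ C₀ ^ (1/q) := by
      refine weakNorm_le _ fun y hy => ?_
      have he : ∑ i : Fin m, ‖φ' i y‖ ^ q = ∑ i ∈ s, ‖φ i y‖ ^ q := by
        rw [show (∑ i : Fin m, ‖φ' i y‖ ^ q)
            = ∑ i : Fin m, (fun l : ℕ => ‖(if l ∈ s then φ l else 0) y‖ ^ q) (i : ℕ) from rfl,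
          Fin.sum_univ_eq_sum_range (fun l => ‖(if l ∈ s then φ l else 0) y‖ ^ q) m]
        rw [Finset.sum_congr rfl (fun i _ => ?_), Finset.sum_ite_mem, Finset.inter_comm,
          Finset.inter_eq_left.2 fun i hi => Finset.mem_range.2 (hsm i hi)]
        split_ifs with h <;> simp [Real.zero_rpow hq0.ne']
      rw [he]
      exact Real.rpow_le_rpow (Finset.sum_nonneg fun i _ => Real.rpow_nonneg (norm_nonneg _) _)
        (hφ y hy s) (by positivity)
    have hWn : 0 ≤ weakNorm q φ' := weakNorm_nonneg hq0 φ'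
    have hPn : 0 ≤ ∏ j, (∑ i : Fin m, ‖x' j i‖ ^ r) ^ (1/r) :=
      Finset.prod_nonneg fun j _ => Real.rpow_nonneg
        (Finset.sum_nonneg fun i _ => Real.rpow_nonneg (norm_nonneg _) _) _
    have h1 : C * (∏ j, (∑ i : Fin m, ‖x' j i‖ ^ r) ^ (1/r)) ≤ C * ∏ j, (M j) ^ (1/r) :=
      mul_le_mul_of_nonneg_left (Finset.prod_le_prod (fun j _ => Real.rpow_nonneg
        (Finset.sum_nonneg fun i _ => Real.rpow_nonneg (norm_nonneg _) _) _)
        (fun j _ => hB1 j)) hCpos.le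
    exact mul_le_mul h1 hB2 hWn
      (mul_nonneg hCpos.le (Finset.prod_nonneg fun j _ => Real.rpow_nonneg (hMn j) _))
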